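/- Every 2-cocycle on the infinite dihedral group D∞ with values in ℂˣ (with trivial action) is a coboundary; that is, H²(D∞, ℂˣ) with trivial coefficients vanishes. -/

import Mathlib

namespace H2DinfAux

/-- Carrier of the central extension of `D∞` by `ℂˣ` determined by a 2-cocycle. -/
@[ext] structure Ext where
  fst : ℂˣ
  snd : DihedralGroup 0

variable (μ : DihedralGroup 0 → DihedralGroup 0 → ℂˣ)

/-- Twisted multiplication. -/
def emul (x y : Ext) : Ext := ⟨x.fst * y.fst * μ x.snd y.snd, x.snd * y.snd⟩

def eone : Ext := ⟨(μ 1 1)⁻¹, 1⟩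

def einv (x : Ext) : Ext := ⟨(μ 1 1)⁻¹ * x.fst⁻¹ * (μ x.snd x.snd⁻¹)⁻¹, x.snd⁻¹⟩

variable (hμ : ∀ g h k : DihedralGroup 0,
      μ g h * μ (g * h) k = μ h k * μ g (h * k))

include hμ

lemma hg1 (g : DihedralGroup 0) : μ g 1 = μ 1 1 := by
  have := hμ g 1 1; simp only [mul_one, one_mul] at this
  exact mul_right_cancel this

lemma h1g (g : DihedralGroup 0) : μ 1 g = μ 1 1 := by
  have := hμ 1 1 g; simp only [mul_one, one_mul] at this
  exact (mul_right_cancel this).symm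

lemma hinv (g : DihedralGroup 0) : μ g⁻¹ g = μ g g⁻¹ := by
  have := hμ g g⁻¹ g
  rw [mul_inv_cancel, inv_mul_cancel, hg1 μ hμ, h1g μ hμ] at this
  exact (mul_right_cancel this).symm

/-- The twisted group structure on `Ext` coming from a 2-cocycle `μ`. -/
def extGroup : Group Ext where
  mul := emul μ
  one := eone μ
  inv := einv μ
  mul_assoc := by
    rintro ⟨a, g⟩ ⟨b, h⟩ ⟨c, k⟩
    show emul μ (emul μ _ _) _ = emul μ _ (emul μ _ _)
    simp only [emul]
    congr 1
    · have h1 := congrArg Units.val (hμ g h k)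
      refine Units.ext ?_
      push_cast at h1 ⊢
      linear_combination (a * b * c : ℂ) * h1
    · exact mul_assoc g h k
  one_mul := by
    rintro ⟨a, g⟩
    show emul μ (eone μ) _ = _
    simp only [emul, eone, h1g μ hμ]
    congr 1 <;> simp [mul_comm]
  mul_one := by
    rintro ⟨a, g⟩
    show emul μ _ (eone μ) = _
    simp only [emul, eone, hg1 μ hμ]
    congr 1 <;> simp [mul_comm]
  inv_mul_cancel := by
    rintro ⟨a, g⟩
    show emul μ (einv μ _) _ = eone μ
    simp only [emul, einv, eone, hinv μ hμ]
    congr 1 <;> simp [mul_comm, mul_left_comm]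

end H2DinfAux

/-- Every unit of `ℂ` has a square root. -/
lemma units_complex_sq (a : ℂˣ) : ∃ b : ℂˣ, b ^ 2 = a := by
  obtain ⟨w, hw⟩ := Complex.isAlgClosed.exists_pow_nat_eq (a : ℂ) (n := 2) (by norm_num)
  have hw0 : w ≠ 0 := by
    intro h; apply a.ne_zero; rw [← hw, h]; ring
  exact ⟨Units.mk0 w hw0, by ext; push_cast; exact hw⟩

lemma r_one_zpow' (m : ℤ) :
    (DihedralGroup.r 1 : DihedralGroup 0) ^ m = DihedralGroup.r (show ZMod 0 from m) := by
  induction m using Int.induction_on with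
  | zero => rfl
  | succ k ih => rw [zpow_add, ih, zpow_one, DihedralGroup.r_mul_r]; rfl
  | pred k ih =>
      rw [sub_eq_add_neg, zpow_add, ih, zpow_neg, zpow_one]
      show DihedralGroup.r _ * (DihedralGroup.r 1)⁻¹ = _
      have : (DihedralGroup.r 1 : DihedralGroup 0)⁻¹ = DihedralGroup.r (-1) := rfl
      rw [this, DihedralGroup.r_mul_r]; rfl

/-- Every 2-cocycle on the infinite dihedral group D∞ (realized in Mathlib as
`DihedralGroup 0`, i.e. ℤ ⋊ ℤ/2ℤ with the inversion action, equivalently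
(ℤ/2ℤ) * (ℤ/2ℤ)) with values in ℂˣ (trivial action) is a coboundary:
H²(D∞, ℂˣ) = 0. -/
theorem h2_infinite_dihedral_units_complex_vanishes
    (μ : DihedralGroup 0 → DihedralGroup 0 → ℂˣ)
    (hcocycle : ∀ g h k : DihedralGroup 0,
      μ g h * μ (g * h) k = μ h k * μ g (h * k)) :
    ∃ f : DihedralGroup 0 → ℂˣ,
      ∀ g h : DihedralGroup 0, μ g h = f g * f h * (f (g * h))⁻¹ := by
  classical
  letI : Group H2DinfAux.Ext := H2DinfAux.extGroup μ hcocycle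
  set c : ℂˣ := μ 1 1 with hc
  -- basic formulas
  have hmul : ∀ x y : H2DinfAux.Ext,
      x * y = ⟨x.fst * y.fst * μ x.snd y.snd, x.snd * y.snd⟩ := fun _ _ => rfl
  have hone : (1 : H2DinfAux.Ext) = ⟨c⁻¹, 1⟩ := rfl
  -- choice of the scalar corrections
  obtain ⟨α, hα⟩ := units_complex_sq ((μ (DihedralGroup.sr 0) (DihedralGroup.sr 0) * c))⁻¹
  obtain ⟨β, hβ⟩ := units_complex_sq
    ((μ (DihedralGroup.sr 1) (DihedralGroup.sr 1) * c) *
      (α * μ (DihedralGroup.sr 0) (DihedralGroup.r 1)) ^ 2)⁻¹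
  -- lifts of the generators
  set S : H2DinfAux.Ext := ⟨α, DihedralGroup.sr 0⟩ with hSdef
  set R : H2DinfAux.Ext := ⟨β, DihedralGroup.r 1⟩ with hRdef
  set T : H2DinfAux.Ext := S * R with hTdef
  have hsr1 : (DihedralGroup.sr 0 : DihedralGroup 0) * DihedralGroup.r 1 = DihedralGroup.sr 1 := by
    rw [DihedralGroup.sr_mul_r, zero_add]
  have hT : T = ⟨α * β * μ (DihedralGroup.sr 0) (DihedralGroup.r 1), DihedralGroup.sr 1⟩ := by
    rw [hTdef, hmul, hSdef, hRdef]
    simp only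
    rw [hsr1]
  have hsrsr : ∀ i : ZMod 0, (DihedralGroup.sr i : DihedralGroup 0) * DihedralGroup.sr i = 1 := by
    intro i
    rw [DihedralGroup.sr_mul_sr, sub_self, DihedralGroup.one_def]
  -- the two relations
  have hSS : S * S = 1 := by
    rw [hmul, hone]
    refine H2DinfAux.Ext.ext ?_ ?_
    · simp only [hSdef]
      refine Units.ext ?_
      have hα' := congrArg Units.val hα
      push_cast at hα' ⊢
      field_simp at hα' ⊢
      linear_combination hα'
    · exact hsrsr 0
  have hTT : T * T = 1 := by
    rw [hmul, hone, hT]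
    refine H2DinfAux.Ext.ext ?_ ?_
    · simp only
      refine Units.ext ?_
      have hβ' := congrArg Units.val hβ
      push_cast at hβ' ⊢
      field_simp at hβ' ⊢
      linear_combination hβ'
    · exact hsrsr 1
  have hSinv : S⁻¹ = S := inv_eq_of_mul_eq_one_right hSS
  have hTinv : T⁻¹ = T := inv_eq_of_mul_eq_one_right hTT
  have hR_eq : S * T = R := by
    rw [hTdef, ← mul_assoc, hSS, one_mul]
  -- conjugation relation
  have hconj : S * R * S⁻¹ = R⁻¹ := by
    rw [hSinv, ← hR_eq, mul_inv_rev, hTinv, hSinv, ← mul_assoc, ← mul_assoc, hSS, one_mul]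
  have hconjn : ∀ n : ℤ, S * R ^ n * S⁻¹ = R ^ (-n) := by
    intro n
    have h1 := map_zpow (MulAut.conj S) R n
    simp only [MulAut.conj_apply] at h1
    rw [h1, hconj, inv_zpow, ← zpow_neg]
  have hRS : ∀ n : ℤ, R ^ n * S = S * R ^ (-n) := by
    intro n
    have h2 := hconjn (-n)
    rw [neg_neg] at h2
    exact (mul_inv_eq_iff_eq_mul.mp h2).symm
  -- the splitting section
  set σ : DihedralGroup 0 → H2DinfAux.Ext := fun g =>
    match g with
    | DihedralGroup.r n => R ^ (show ℤ from n)
    | DihedralGroup.sr n => S * R ^ (show ℤ from n) with hσdef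
  have hσr : ∀ n : ZMod 0, σ (DihedralGroup.r n) = R ^ (show ℤ from n) := fun _ => rfl
  have hσsr : ∀ n : ZMod 0, σ (DihedralGroup.sr n) = S * R ^ (show ℤ from n) := fun _ => rfl
  -- the section has the right second component
  have hπmul : ∀ x y : H2DinfAux.Ext, (x * y).snd = x.snd * y.snd := fun _ _ => rfl
  set π : H2DinfAux.Ext →* DihedralGroup 0 :=
    { toFun := H2DinfAux.Ext.snd, map_one' := rfl, map_mul' := fun _ _ => rfl } with hπ
  have hπR : ∀ n : ℤ, (R ^ n).snd = DihedralGroup.r (show ZMod 0 from n) := by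
    intro n
    have : (R ^ n).snd = π (R ^ n) := rfl
    rw [this, map_zpow]
    have hπR1 : π R = DihedralGroup.r 1 := rfl
    rw [hπR1, r_one_zpow']
  have hσsnd : ∀ g : DihedralGroup 0, (σ g).snd = g := by
    rintro (n | n)
    · rw [hσr, hπR]
    · rw [hσsr, hπmul, hπR]
      show DihedralGroup.sr 0 * DihedralGroup.r n = _
      rw [DihedralGroup.sr_mul_r, zero_add]
  -- arithmetic on ZMod 0 = ℤ
  have hadd : ∀ i j : ZMod 0, (show ℤ from i + j) = (show ℤ from i) + (show ℤ from j) :=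
    fun _ _ => rfl
  have hsub : ∀ i j : ZMod 0, (show ℤ from i - j) = (show ℤ from i) - (show ℤ from j) :=
    fun _ _ => rfl
  -- the section is multiplicative
  have hσmul : ∀ g h : DihedralGroup 0, σ g * σ h = σ (g * h) := by
    rintro (i | i) (j | j)
    · rw [DihedralGroup.r_mul_r, hσr, hσr, hσr, hadd, zpow_add]
    · rw [DihedralGroup.r_mul_sr, hσr, hσsr, hσsr, hsub, ← mul_assoc, hRS, mul_assoc,
        ← zpow_add]
      congr 2
      ring
    · rw [DihedralGroup.sr_mul_r, hσsr, hσr, hσsr, hadd, mul_assoc, ← zpow_add]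
    · rw [DihedralGroup.sr_mul_sr, hσsr, hσsr, hσr, hsub]
      calc S * R ^ (show ℤ from i) * (S * R ^ (show ℤ from j))
          = S * (R ^ (show ℤ from i) * S) * R ^ (show ℤ from j) := by
            rw [mul_assoc, mul_assoc, mul_assoc]
        _ = S * (S * R ^ (-(show ℤ from i))) * R ^ (show ℤ from j) := by rw [hRS]
        _ = (S * S) * (R ^ (-(show ℤ from i)) * R ^ (show ℤ from j)) := by
            rw [← mul_assoc, ← mul_assoc, mul_assoc (S * S)]
        _ = R ^ ((show ℤ from j) - (show ℤ from i)) := by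
            rw [hSS, one_mul, ← zpow_add]
            congr 1
            ring
  -- extract the trivializing function
  refine ⟨fun g => ((σ g).fst)⁻¹, ?_⟩
  intro g h
  have h1 := congrArg H2DinfAux.Ext.fst (hσmul g h)
  rw [hmul] at h1
  simp only [hσsnd] at h1
  show μ g h = ((σ g).fst)⁻¹ * ((σ h).fst)⁻¹ * (((σ (g * h)).fst)⁻¹)⁻¹
  rw [inv_inv]
  have h1' := congrArg Units.val h1
  refine Units.ext ?_
  push_cast at h1' ⊢
  field_simp
  linear_combination h1'
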